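/- Fix a norm ‖·‖ on ℝ^d and let 1 ≤ p ≤ d. Let S be a finite Borel measure on S^{d-1}_+ with σ_j := ∫ a_j S(da) > 0 for all j = 1,…,d, and set σ_min := min_j σ_j, σ_max := max_j σ_j. Then for every matrix H ∈ [0,∞)^{d×d} and every pair of indices (i,j) with H_{ij} = max_{k,l} H_{kl}, one has ∫_{S^{d-1}_+} Σ_{k=1}^d |(H ⋄ a)_k − a_k| S(da) ≥ (max_{k,l} H_{kl}) · σ_j − σ_i. Consequently, if ∫_{S^{d-1}_+} Σ_{k=1}^d |(H ⋄ a)_k − a_k| S(da) ≤ Σ_{k=p+1}^d σ_k, then max_{k,l} H_{kl} ≤ (Σ_{k=p+1}^d σ_k + σ_max)/σ_min. -/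

import Mathlib

open MeasureTheory Finset

/-- Max-linear action of a nonnegative matrix on a vector:
`(H ⋄ x) i = max_l H i l * x l`. -/
noncomputable def maxVec {p d : ℕ} (H : Fin p → Fin d → ℝ) (x : Fin d → ℝ) : Fin p → ℝ :=
  fun i => ⨆ l, H i l * x l

/-- Bounding step in the proof of Lemma S3 of the paper: for any nonnegative matrix
`H ∈ [0,∞)^{d×d}` and indices `(i,j)` realizing the maximal entry of `H`,
`∫ Σ_k |(H ⋄ a)_k − a_k| S(da) ≥ ‖H‖_∞ σ_j − σ_i`; consequently any `H` whose
reconstruction error is at most `Σ_{k=p+1}^d σ_k` satisfies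
`‖H‖_∞ ≤ (Σ_{k=p+1}^d σ_k + σ_max)/σ_min`. -/
theorem recErr_lower_bound_and_sup_entry_bound
    {p d : ℕ} (hp : 1 ≤ p) (hpd : p ≤ d)
    (N : (Fin d → ℝ) → ℝ)
    (hN_tri : ∀ x y, N (x + y) ≤ N x + N y)
    (hN_smul : ∀ (c : ℝ) (x), N (c • x) = |c| * N x)
    (hN_def : ∀ x, N x = 0 → x = 0)
    (S : Measure (Fin d → ℝ)) [IsFiniteMeasure S]
    (hS_sphere : S {a | ¬ ((∀ i, 0 ≤ a i) ∧ N a = 1)} = 0)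
    (hS_pos : ∀ j, 0 < ∫ a, a j ∂S)
    (H : Fin d → Fin d → ℝ) (hH : ∀ i j, 0 ≤ H i j) :
    (∀ i j : Fin d, H i j = (⨆ k : Fin d, ⨆ l : Fin d, H k l) →
      (⨆ k : Fin d, ⨆ l : Fin d, H k l) * (∫ a, a j ∂S) - (∫ a, a i ∂S) ≤
        ∫ a, ∑ k, |maxVec H a k - a k| ∂S) ∧
    ((∫ a, ∑ k, |maxVec H a k - a k| ∂S) ≤
        (∑ k ∈ univ.filter (fun k : Fin d => p ≤ (k : ℕ)), ∫ a, a k ∂S) →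
      (⨆ k : Fin d, ⨆ l : Fin d, H k l) ≤
        ((∑ k ∈ univ.filter (fun k : Fin d => p ≤ (k : ℕ)), ∫ a, a k ∂S) +
            ⨆ j : Fin d, ∫ a, a j ∂S) / ⨅ j : Fin d, ∫ a, a j ∂S) := by
  classical
  have hd : 0 < d := hp.trans hpd
  haveI : Nonempty (Fin d) := ⟨⟨0, hd⟩⟩
  set M := ⨆ k : Fin d, ⨆ l : Fin d, H k l with hMdef
  have hae : ∀ᵐ a ∂S, (∀ i, 0 ≤ a i) ∧ N a = 1 := by
    rw [MeasureTheory.ae_iff]; exact hS_sphere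
  have hInt : ∀ j, Integrable (fun a : Fin d → ℝ => a j) S := by
    intro j
    by_contra h
    exact (hS_pos j).ne' (integral_undef h)
  have hle1 : ∀ k l, H k l ≤ M := by
    intro k l
    have h1 : H k l ≤ ⨆ l, H k l :=
      le_ciSup (f := fun l => H k l) (Set.Finite.bddAbove (Set.finite_range _)) l
    have h2 : (⨆ l, H k l) ≤ M :=
      le_ciSup (f := fun k => ⨆ l, H k l) (Set.Finite.bddAbove (Set.finite_range _)) k
    exact h1.trans h2
  have hM0 : 0 ≤ M := le_trans (hH ⟨0, hd⟩ ⟨0, hd⟩) (hle1 _ _)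
  have hmaxVec : ∀ (a : Fin d → ℝ) (k : Fin d),
      maxVec H a k = univ.sup' univ_nonempty (fun l => H k l * a l) := by
    intro a k; rw [Finset.sup'_univ_eq_ciSup]; rfl
  have hcont : Continuous (fun a : Fin d → ℝ => ∑ k, |maxVec H a k - a k|) := by
    apply continuous_finset_sum
    intro k _
    apply Continuous.abs
    apply Continuous.sub _ (continuous_apply k)
    have heq : (fun a : Fin d → ℝ => maxVec H a k)
        = (fun a => univ.sup' univ_nonempty (fun l => H k l * a l)) :=
      funext fun a => hmaxVec a k
    rw [heq]
    exact Continuous.finset_sup'_apply _ fun l _ => continuous_const.mul (continuous_apply l)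
  have hmx_ge : ∀ (a : Fin d → ℝ) (k l : Fin d), H k l * a l ≤ maxVec H a k := by
    intro a k l
    rw [hmaxVec]; exact Finset.le_sup' (fun l => H k l * a l) (mem_univ l)
  have hmx_le : ∀ (a : Fin d → ℝ), (∀ i, 0 ≤ a i) → ∀ k, maxVec H a k ≤ ∑ l, H k l * a l := by
    intro a ha k
    rw [hmaxVec]
    apply Finset.sup'_le
    intro l _
    exact Finset.single_le_sum (fun m _ => mul_nonneg (hH k m) (ha m)) (mem_univ l)
  have hmx0 : ∀ (a : Fin d → ℝ), (∀ i, 0 ≤ a i) → ∀ k, 0 ≤ maxVec H a k := by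
    intro a ha k
    exact le_trans (mul_nonneg (hH k k) (ha k)) (hmx_ge a k k)
  have hIntG : Integrable (fun a : Fin d → ℝ => ∑ k, ((∑ l, H k l * a l) + a k)) S := by
    apply integrable_finset_sum
    intro k _
    exact (integrable_finset_sum _ fun l _ => (hInt l).const_mul _).add (hInt k)
  have hIntF : Integrable (fun a : Fin d → ℝ => ∑ k, |maxVec H a k - a k|) S := by
    refine Integrable.mono' hIntG hcont.aestronglyMeasurable ?_
    filter_upwards [hae] with a ha
    rw [Real.norm_eq_abs, abs_of_nonneg (Finset.sum_nonneg fun k _ => abs_nonneg _)]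
    apply Finset.sum_le_sum
    intro k _
    calc |maxVec H a k - a k| ≤ |maxVec H a k| + |a k| := abs_sub _ _
      _ = maxVec H a k + a k := by
          rw [abs_of_nonneg (hmx0 a ha.1 k), abs_of_nonneg (ha.1 k)]
      _ ≤ (∑ l, H k l * a l) + a k := add_le_add (hmx_le a ha.1 k) le_rfl
  have key : ∀ i j : Fin d, H i j = M →
      M * (∫ a, a j ∂S) - (∫ a, a i ∂S) ≤ ∫ a, ∑ k, |maxVec H a k - a k| ∂S := by
    intro i j hij
    have h1 : Integrable (fun a : Fin d → ℝ => M * a j - a i) S :=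
      ((hInt j).const_mul M).sub (hInt i)
    have h2 : ∫ a, (M * a j - a i) ∂S = M * (∫ a, a j ∂S) - ∫ a, a i ∂S := by
      have hs := integral_smul (μ := S) M (fun a : Fin d → ℝ => a j)
      simp only [smul_eq_mul] at hs
      rw [integral_sub ((hInt j).const_mul M) (hInt i), hs]
    rw [← h2]
    refine integral_mono_ae h1 hIntF ?_
    filter_upwards [hae] with a ha
    calc M * a j - a i = H i j * a j - a i := by rw [hij]
      _ ≤ maxVec H a i - a i := sub_le_sub_right (hmx_ge a i j) _
      _ ≤ |maxVec H a i - a i| := le_abs_self _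
      _ ≤ ∑ k, |maxVec H a k - a k| :=
          Finset.single_le_sum (f := fun k => |maxVec H a k - a k|)
            (fun k _ => abs_nonneg _) (mem_univ i)
  refine ⟨key, ?_⟩
  intro hle
  obtain ⟨⟨i, j⟩, -, hmax⟩ := Finset.exists_max_image (univ : Finset (Fin d × Fin d))
    (fun q => H q.1 q.2) univ_nonempty
  have hij : H i j = M := le_antisymm (hle1 i j) (by
    apply ciSup_le; intro k; apply ciSup_le; intro l; exact hmax (k, l) (mem_univ _))
  have hkey := le_trans (key i j hij) hle
  set T := ∑ k ∈ univ.filter (fun k : Fin d => p ≤ (k : ℕ)), ∫ a, a k ∂S with hT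
  have hσmin : (0 : ℝ) < ⨅ j : Fin d, ∫ a, a j ∂S := by
    rw [← Finset.inf'_univ_eq_ciInf]
    exact (Finset.lt_inf'_iff _).2 fun j _ => hS_pos j
  rw [le_div_iff₀ hσmin]
  have h1 : M * (⨅ j : Fin d, ∫ a, a j ∂S) ≤ M * ∫ a, a j ∂S :=
    mul_le_mul_of_nonneg_left
      (ciInf_le (f := fun j => ∫ a, a j ∂S) (Set.Finite.bddBelow (Set.finite_range _)) j) hM0
  have h2 : (∫ a, a i ∂S) ≤ ⨆ j : Fin d, ∫ a, a j ∂S :=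
    le_ciSup (f := fun j => ∫ a, a j ∂S) (Set.Finite.bddAbove (Set.finite_range _)) i
  linarith
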